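/- arXiv:2209.03866 — 5 statements merged into one kernel-verified Lean document; each statement's English description precedes it below -/
import Mathlib

section
/- The function c(z) = ((1+z)/z^2) * log(1+z) - 1/z is strictly decreasing on (0, ∞). -/
open Real Set

lemma g_hasDeriv (z : ℝ) (hz : (0:ℝ) ≤ z) :
    HasDerivAt (fun z : ℝ => Real.log (1 + z) - 2 * z / (z + 2))
      (1 / (1 + z) - 4 / (z + 2) ^ 2) z := by
  have h1 : (1:ℝ) + z > 0 := by linarith
  have h2 : z + 2 ≠ 0 := by linarith
  have hlog : HasDerivAt (fun z : ℝ => Real.log (1 + z)) (1 / (1 + z)) z := by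
    have := (Real.hasDerivAt_log (ne_of_gt h1)).comp z
      ((hasDerivAt_id z).const_add 1)
    simpa [one_div, Function.comp_def] using this
  have hq : HasDerivAt (fun z : ℝ => 2 * z / (z + 2)) (4 / (z + 2) ^ 2) z := by
    have hn : HasDerivAt (fun z : ℝ => 2 * z) 2 z := by
      simpa using (hasDerivAt_id z).const_mul (2:ℝ)
    have hd : HasDerivAt (fun z : ℝ => z + 2) 1 z := by
      simpa using (hasDerivAt_id z).add_const (2:ℝ)
    have := hn.div hd h2
    convert this using 1
    · rfl
    · rfl
    · rfl
    field_simp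
    ring
  exact hlog.sub hq

lemma log_ineq {z : ℝ} (hz : 0 < z) : 2 * z / (z + 2) < Real.log (1 + z) := by
  have hmono : StrictMonoOn (fun z : ℝ => Real.log (1 + z) - 2 * z / (z + 2)) (Ici 0) := by
    apply strictMonoOn_of_deriv_pos (convex_Ici 0)
    · intro x hx
      exact ((g_hasDeriv x hx).continuousAt).continuousWithinAt
    · intro x hx
      rw [interior_Ici] at hx
      have hx' : (0:ℝ) < x := hx
      rw [(g_hasDeriv x hx'.le).deriv]
      have h1 : (1:ℝ) + x > 0 := by linarith
      have h2 : (0:ℝ) < (x + 2) ^ 2 := by positivity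
      rw [div_sub_div _ _ (ne_of_gt h1) (ne_of_gt h2), div_pos_iff]
      left
      constructor
      · nlinarith
      · positivity
  have := hmono (self_mem_Ici) (le_of_lt hz : (0:ℝ) ≤ z) hz
  simpa using this

lemma c_hasDeriv (z : ℝ) (hz : 0 < z) :
    HasDerivAt (fun z : ℝ => ((1 + z) / z ^ 2) * Real.log (1 + z) - 1 / z)
      ((2 * z - (z + 2) * Real.log (1 + z)) / z ^ 3) z := by
  have h1 : (1:ℝ) + z > 0 := by linarith
  have hz2 : z ^ 2 ≠ 0 := by positivity
  have hzne : z ≠ 0 := ne_of_gt hz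
  have hlog : HasDerivAt (fun z : ℝ => Real.log (1 + z)) (1 / (1 + z)) z := by
    have := (Real.hasDerivAt_log (ne_of_gt h1)).comp z
      ((hasDerivAt_id z).const_add 1)
    simpa [one_div, Function.comp_def] using this
  have hfrac : HasDerivAt (fun z : ℝ => (1 + z) / z ^ 2)
      ((1 * z ^ 2 - (1 + z) * (2 * z)) / (z ^ 2) ^ 2) z := by
    have hn : HasDerivAt (fun z : ℝ => 1 + z) 1 z := (hasDerivAt_id z).const_add 1
    have hd : HasDerivAt (fun z : ℝ => z ^ 2) (2 * z) z := by
      simpa [mul_comm] using hasDerivAt_pow 2 z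
    exact hn.div hd hz2
  have hinv : HasDerivAt (fun z : ℝ => 1 / z) (-(1 / z ^ 2)) z := by
    simpa [one_div] using (hasDerivAt_inv hzne)
  have := (hfrac.mul hlog).sub hinv
  convert this using 1
  · rfl
  · rfl
  · rfl
  have hlogmul : Real.log (1 + z) * (1 + z) / (1 + z) = Real.log (1 + z) := by
    field_simp
  field_simp
  ring

theorem c_strict_anti :
    StrictAntiOn (fun z : ℝ => ((1 + z) / z ^ 2) * Real.log (1 + z) - 1 / z)
      (Set.Ioi (0 : ℝ)) := by
  apply strictAntiOn_of_deriv_neg (convex_Ioi 0)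
  · intro x hx
    exact ((c_hasDeriv x hx).continuousAt).continuousWithinAt
  · intro x hx
    rw [interior_Ioi] at hx
    rw [(c_hasDeriv x hx).deriv]
    have hx' : (0:ℝ) < x := hx
    apply div_neg_of_neg_of_pos
    · have h := log_ineq hx'
      rw [div_lt_iff₀ (by linarith : (0:ℝ) < x + 2)] at h
      nlinarith
    · positivity
end

section
/- For every real z > 0, log(1+z) > 3z(2+z)/(z^2+6z+6). -/
open Real Set

noncomputable def fpd (x : ℝ) : ℝ := Real.log (1+x) - 3*x*(2+x)/(x^2+6*x+6)

lemma fpd_hasDeriv (x : ℝ) (hx : 0 ≤ x) :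
    HasDerivAt fpd (x^4/((1+x)*(x^2+6*x+6)^2)) x := by
  have h1 : (1:ℝ) + x ≠ 0 := by nlinarith
  have h2 : x^2+6*x+6 ≠ 0 := by nlinarith
  have hlog : HasDerivAt (fun y : ℝ => Real.log (1+y)) (1/(1+x)) x := by
    have := (Real.hasDerivAt_log h1).comp x ((hasDerivAt_id x).const_add 1)
    simpa [one_div, Function.comp_def] using this
  have hnum : HasDerivAt (fun y : ℝ => 3*y*(2+y)) (6+6*x) x := by
    have h : HasDerivAt (fun y : ℝ => 3*y*(2+y)) (3*1*(2+x) + 3*x*1) x := by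
      exact (((hasDerivAt_id x).const_mul 3)).mul ((hasDerivAt_id x).const_add 2)
    convert h using 1; ring
  have hden : HasDerivAt (fun y : ℝ => y^2+6*y+6) (2*x+6) x := by
    have h : HasDerivAt (fun y : ℝ => y^2+6*y+6) (↑2 * x ^ (2 - 1) + 6 * 1) x := by
      simpa using ((hasDerivAt_pow 2 x).add ((hasDerivAt_id x).const_mul 6)).add_const 6
    convert h using 1; ring
  have hq := hnum.div hden h2
  have h : HasDerivAt (fun y : ℝ => Real.log (1+y) - 3*y*(2+y)/(y^2+6*y+6)) _ x := hlog.sub hq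
  refine h.congr_deriv ?_
  field_simp
  ring

theorem log_gt_pade (z : ℝ) (hz : 0 < z) :
    Real.log (1 + z) > 3 * z * (2 + z) / (z ^ 2 + 6 * z + 6) := by
  have hmono : StrictMonoOn fpd (Ici 0) := by
    apply strictMonoOn_of_deriv_pos (convex_Ici 0)
    · intro x hx
      exact (fpd_hasDeriv x hx).differentiableAt.continuousAt.continuousWithinAt
    · intro x hx
      rw [interior_Ici] at hx
      have hx' : (0:ℝ) < x := hx
      rw [(fpd_hasDeriv x hx'.le).deriv]
      positivity
  have h0 : fpd 0 < fpd z := hmono (le_refl (0:ℝ)) hz.le hz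
  have : fpd 0 = 0 := by simp [fpd]
  rw [this] at h0
  have : 0 < Real.log (1+z) - 3*z*(2+z)/(z^2+6*z+6) := h0
  linarith
end

section
/- Let ξ(x) = λ x^p + (1-λ) x^s with s > p ≥ 2 integers and λ ∈ (0,1). Then for all x ∈ (0,1], ξ(x)·(ξ'(1) - ξ'(x))/(1-x) - ξ'(x)·(ξ'(x) - ξ(x)/x) ≥ λ(1-λ)(s-p)^2 x^{p+s-2} > 0. -/
/-- The mixture `ξ(x) = λ x^p + (1-λ) x^s`. -/
def xi (p s : ℕ) (l : ℝ) (x : ℝ) : ℝ := l * x ^ p + (1 - l) * x ^ s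

/-- Its derivative `ξ'(x)`. -/
def xi' (p s : ℕ) (l : ℝ) (x : ℝ) : ℝ :=
  (p : ℝ) * l * x ^ (p - 1) + (s : ℝ) * (1 - l) * x ^ (s - 1)

/-- The polynomial `(ξ'(1) - ξ'(x))/(1 - x)`, interpreted via the polynomial identity
`(ξ'(1) - ξ'(x))/(1-x) = pλ Σ_{k<p-1} x^k + s(1-λ) Σ_{k<s-1} x^k`. -/
def diffQuot (p s : ℕ) (l : ℝ) (x : ℝ) : ℝ :=
  (p : ℝ) * l * ∑ k ∈ Finset.range (p - 1), x ^ k +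
    (s : ℝ) * (1 - l) * ∑ k ∈ Finset.range (s - 1), x ^ k

lemma sum_ge_aux (x : ℝ) (hx : 0 < x) (hx1 : x ≤ 1) (c m : ℕ) :
    (m : ℝ) * x ^ (c + m) ≤ x ^ (c + 1) * ∑ k ∈ Finset.range m, x ^ k := by
  rw [Finset.mul_sum]
  calc (m : ℝ) * x ^ (c + m) = ∑ _k ∈ Finset.range m, x ^ (c + m) := by
        rw [Finset.sum_const, nsmul_eq_mul, Finset.card_range]
    _ ≤ ∑ k ∈ Finset.range m, x ^ (c + 1) * x ^ k := by
        apply Finset.sum_le_sum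
        intro k hk
        rw [← pow_add]
        exact pow_le_pow_of_le_one hx.le hx1 (by simp at hk; omega)

theorem xi_inequality (p s : ℕ) (l : ℝ) (hp : 2 ≤ p) (hps : p < s)
    (hl : l ∈ Set.Ioo (0 : ℝ) 1) :
    ∀ x ∈ Set.Ioc (0 : ℝ) 1,
      xi p s l x * diffQuot p s l x
          - xi' p s l x * (xi' p s l x - xi p s l x / x)
        ≥ l * (1 - l) * ((s : ℝ) - (p : ℝ)) ^ 2 * x ^ (p + s - 2)
      ∧ 0 < l * (1 - l) * ((s : ℝ) - (p : ℝ)) ^ 2 * x ^ (p + s - 2) := by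
  obtain ⟨hl0, hl1⟩ := hl
  have h1l : 0 < 1 - l := by linarith
  obtain ⟨a, ha1, rfl⟩ : ∃ a, 1 ≤ a ∧ p = a + 1 := ⟨p - 1, by omega, by omega⟩
  obtain ⟨b, hab, rfl⟩ : ∃ b, a < b ∧ s = b + 1 := ⟨s - 1, by omega, by omega⟩
  rintro x ⟨hx0, hx1⟩
  have hE : a + 1 + (b + 1) - 2 = a + b := by omega
  have hcast : ((b : ℝ) + 1) - ((a : ℝ) + 1) = (b : ℝ) - a := by ring
  have hba : (0 : ℝ) < (b : ℝ) - a := by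
    have : (a : ℝ) < b := by exact_mod_cast hab
    linarith
  have hpos : 0 < l * (1 - l) * (((b + 1 : ℕ) : ℝ) - ((a + 1 : ℕ) : ℝ)) ^ 2
      * x ^ (a + 1 + (b + 1) - 2) := by
    rw [hE]
    push_cast
    rw [hcast]
    exact mul_pos (mul_pos (mul_pos hl0 h1l) (pow_pos hba 2)) (pow_pos hx0 _)
  refine ⟨?_, hpos⟩
  unfold xi xi' diffQuot
  simp only [Nat.add_sub_cancel, hE]
  have hdiv : (l * x ^ (a + 1) + (1 - l) * x ^ (b + 1)) / x
      = l * x ^ a + (1 - l) * x ^ b := by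
    field_simp
    ring
  rw [hdiv]
  have h1 := sum_ge_aux x hx0 hx1 a a
  have h2 := sum_ge_aux x hx0 hx1 a b
  have h3 := sum_ge_aux x hx0 hx1 b a
  have h4 := sum_ge_aux x hx0 hx1 b b
  have c1 : (0:ℝ) ≤ l * l * ((a:ℝ) + 1) := by positivity
  have c2 : (0:ℝ) ≤ l * (1 - l) * ((b:ℝ) + 1) := by positivity
  have c3 : (0:ℝ) ≤ l * (1 - l) * ((a:ℝ) + 1) := by positivity
  have c4 : (0:ℝ) ≤ (1 - l) * (1 - l) * ((b:ℝ) + 1) := by positivity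
  have h1' := mul_le_mul_of_nonneg_left h1 c1
  have h2' := mul_le_mul_of_nonneg_left h2 c2
  have h3' := mul_le_mul_of_nonneg_left h3 c3
  have h4' := mul_le_mul_of_nonneg_left h4 c4
  push_cast
  simp only [pow_add, pow_one] at h1' h2' h3' h4' ⊢
  nlinarith [h1', h2', h3', h4']
end

section
/- Let p ≥ 3 be an integer. For all integers (or reals) s > 0 and p, the inequality 2(2p+3)(p-1)s^2 + 12(p-1)^2(p-2)s + 4(p-1)^2(p-2)^2 > 0 holds; consequently, if Δ := s^2 - 6(p-1)s + (p-1)(p+7) > 0 with s > p > 2, then λ_2* := 2s(s-1)(s-2)/((s-p)(a - p√Δ)) with a = 2s^2 + 3(p-2)s - (p-1)(p+4) satisfies λ_2* < 1. -/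
theorem lambda2_lt_one (p : ℕ) (hp : 3 ≤ p) :
    (∀ s : ℝ, 0 < s →
        0 < 2 * (2 * (p : ℝ) + 3) * ((p : ℝ) - 1) * s ^ 2
            + 12 * ((p : ℝ) - 1) ^ 2 * ((p : ℝ) - 2) * s
            + 4 * ((p : ℝ) - 1) ^ 2 * ((p : ℝ) - 2) ^ 2) ∧
    (∀ s : ℕ, p < s →
        0 < (s : ℝ) ^ 2 - 6 * ((p : ℝ) - 1) * (s : ℝ) + ((p : ℝ) - 1) * ((p : ℝ) + 7) →
        2 * (s : ℝ) * ((s : ℝ) - 1) * ((s : ℝ) - 2) /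
            (((s : ℝ) - (p : ℝ)) *
              ((2 * (s : ℝ) ^ 2 + 3 * ((p : ℝ) - 2) * (s : ℝ) - ((p : ℝ) - 1) * ((p : ℝ) + 4))
                - (p : ℝ) * Real.sqrt
                    ((s : ℝ) ^ 2 - 6 * ((p : ℝ) - 1) * (s : ℝ)
                      + ((p : ℝ) - 1) * ((p : ℝ) + 7))))
          < 1) := by
  have hp3 : (3 : ℝ) ≤ (p : ℝ) := by exact_mod_cast hp
  constructor
  · intro s hs
    have e1 : (0:ℝ) < 2 * (2 * (p:ℝ) + 3) * ((p:ℝ) - 1) := by nlinarith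
    have e2 : (0:ℝ) ≤ 12 * ((p:ℝ) - 1) ^ 2 * ((p:ℝ) - 2) := by nlinarith [sq_nonneg ((p:ℝ)-1)]
    have e3 : (0:ℝ) ≤ 4 * ((p:ℝ) - 1) ^ 2 * ((p:ℝ) - 2) ^ 2 := by positivity
    nlinarith [mul_pos e1 (mul_pos hs hs), mul_nonneg e2 hs.le]
  · intro s hps hD
    have hS : (p : ℝ) < (s : ℝ) := by exact_mod_cast hps
    set S := (s : ℝ) with hSdef
    set P := (p : ℝ) with hPdef
    set r := Real.sqrt (S ^ 2 - 6 * (P - 1) * S + (P - 1) * (P + 7)) with hrdef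
    have hr0 : 0 ≤ r := Real.sqrt_nonneg _
    have hr2 : r ^ 2 = S ^ 2 - 6 * (P - 1) * S + (P - 1) * (P + 7) :=
      Real.sq_sqrt hD.le
    have hSp : 0 < S - P := by linarith
    have hA : 0 < (S - P) * (2 * S ^ 2 + 3 * (P - 2) * S - (P - 1) * (P + 4))
        - 2 * S * (S - 1) * (S - 2) := by
      have hPpos : (0:ℝ) < P := by linarith
      nlinarith [mul_pos hPpos hD, mul_pos hPpos (show (0:ℝ) < (2*P-3)*S - 3*(P-1) by nlinarith)]
    have hX0 : 0 ≤ P * (S - P) * r := by positivity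
    have key : P * (S - P) * r <
        (S - P) * (2 * S ^ 2 + 3 * (P - 2) * S - (P - 1) * (P + 4))
          - 2 * S * (S - 1) * (S - 2) := by
      have hX2 : (P * (S - P) * r) ^ 2
          = P ^ 2 * (S - P) ^ 2 * (S ^ 2 - 6 * (P - 1) * S + (P - 1) * (P + 7)) := by
        rw [mul_pow, mul_pow, hr2]
      have hGpos : (0:ℝ) < 4 * P ^ 2 * (P - 1) * (P - 2) * ((S - 1) * (S - 2)) := by
        have : (0:ℝ) < (S - 1) * (S - 2) := by nlinarith
        have : (0:ℝ) < 4 * P ^ 2 * (P - 1) * (P - 2) := by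
          nlinarith [mul_pos (show (0:ℝ) < P ^ 2 by positivity)
            (mul_pos (show (0:ℝ) < P - 1 by linarith) (show (0:ℝ) < P - 2 by linarith))]
        positivity
      nlinarith [hX2, hA, hX0, hGpos]
    have hden : 2 * S * (S - 1) * (S - 2) <
        (S - P) * ((2 * S ^ 2 + 3 * (P - 2) * S - (P - 1) * (P + 4)) - P * r) := by
      nlinarith [key]
    have hNpos : 0 < 2 * S * (S - 1) * (S - 2) := by
      nlinarith [mul_pos (mul_pos (show (0:ℝ) < S by linarith) (show (0:ℝ) < S - 1 by linarith))
        (show (0:ℝ) < S - 2 by linarith)]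
    rw [div_lt_one (lt_trans hNpos hden)]
    exact hden
end

section
/- Let s > p > 2 be integers with Δ := s^2 - 6(p-1)s + (p-1)(p+7) > 0. Then s^2 - 5ps + 5s + 2p^2 - 2 - 2(p-1)√(2(p-2)(s-2)) > 0. -/
theorem key_positivity (p s : ℕ) (hp : 2 < p) (hps : p < s)
    (hΔ : 0 < (s : ℝ) ^ 2 - 6 * ((p : ℝ) - 1) * (s : ℝ) + ((p : ℝ) - 1) * ((p : ℝ) + 7)) :
    0 < (s : ℝ) ^ 2 - 5 * (p : ℝ) * (s : ℝ) + 5 * (s : ℝ) + 2 * (p : ℝ) ^ 2 - 2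
        - 2 * ((p : ℝ) - 1) * Real.sqrt (2 * ((p : ℝ) - 2) * ((s : ℝ) - 2)) := by
  have hp3 : (3 : ℝ) ≤ (p : ℝ) := by exact_mod_cast hp
  have hs : (p : ℝ) < (s : ℝ) := by exact_mod_cast hps
  have ht : 0 ≤ 2 * ((p : ℝ) - 2) * ((s : ℝ) - 2) := by nlinarith
  have hB := Real.sq_sqrt ht
  have hBnn := Real.sqrt_nonneg (2 * ((p : ℝ) - 2) * ((s : ℝ) - 2))
  set B := Real.sqrt (2 * ((p : ℝ) - 2) * ((s : ℝ) - 2)) with hBdef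
  have hA : 0 < (s : ℝ) ^ 2 - 5 * (p : ℝ) * (s : ℝ) + 5 * (s : ℝ) + 2 * (p : ℝ) ^ 2 - 2 := by
    nlinarith
  have hne : (s : ℝ) - 2 * ((p : ℝ) - 1) ≠ 0 := by
    intro h
    have hseq : (s : ℝ) = 2 * (p : ℝ) - 2 := by linarith
    rw [hseq] at hΔ
    nlinarith
  have hsq : 0 < ((s : ℝ) - 2 * ((p : ℝ) - 1)) ^ 2 := by positivity
  nlinarith [mul_pos hsq hΔ, hB, hBnn, hA, mul_nonneg (by linarith : (0:ℝ) ≤ 2 * ((p:ℝ) - 1)) hBnn]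
end
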